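/- Let V be an isometry on H, and let H_s = closure of span of ⋃_{j≥0} V^j(ker V*). If S is a closed subspace reducing V such that V restricted to S is a shift (V*^m → 0 strongly on S), then S ⊆ H_s. -/

import Mathlib

open ContinuousLinearMap Filter Topology
open scoped InnerProductSpace

theorem stmt_14 {H : Type*} [NormedAddCommGroup H] [InnerProductSpace ℂ H] [CompleteSpace H]
    (V : H →L[ℂ] H) (hV : adjoint V * V = 1)
    (Hs : Submodule ℂ H)
    (hHs : Hs = (⨆ j : ℕ,
      Submodule.map (V ^ j).toLinearMap (LinearMap.ker (adjoint V).toLinearMap)).topologicalClosure)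
    (S : Submodule ℂ H) (hSclosed : IsClosed (S : Set H))
    (hSred : ∀ x ∈ S, V x ∈ S ∧ adjoint V x ∈ S)
    (hshift : ∀ x ∈ S, Tendsto (fun m : ℕ => ‖((adjoint V) ^ m) x‖) atTop (𝓝 0)) :
    S ≤ Hs := by
  subst hHs
  set K := ⨆ j : ℕ, Submodule.map (V ^ j).toLinearMap (LinearMap.ker (adjoint V).toLinearMap) with hK
  intro x hx
  -- V is an isometry
  have hnorm : ∀ z : H, ‖V z‖ = ‖z‖ := by
    intro z
    have h1 : (⟪V z, V z⟫_ℂ : ℂ) = ⟪z, z⟫_ℂ := by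
      rw [← adjoint_inner_left, ← ContinuousLinearMap.mul_apply, hV, ContinuousLinearMap.one_apply]
    have h2 := congrArg (‖·‖) h1
    rw [inner_self_eq_norm_sq_to_K (𝕜 := ℂ), inner_self_eq_norm_sq_to_K (𝕜 := ℂ)] at h1
    have h3 : ‖V z‖ ^ 2 = ‖z‖ ^ 2 := by exact_mod_cast h1
    nlinarith [norm_nonneg (V z), norm_nonneg z]
  have hnormpow : ∀ (m : ℕ) (z : H), ‖(V ^ m) z‖ = ‖z‖ := by
    intro m
    induction m with
    | zero => intro z; simp
    | succ n ih => intro z; rw [pow_succ', ContinuousLinearMap.mul_apply, hnorm, ih]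
  -- membership of partial terms
  have hmem : ∀ m : ℕ, x - (V ^ m) (((adjoint V) ^ m) x) ∈ K := by
    intro m
    induction m with
    | zero => simp
    | succ n ih =>
      have hy : (((adjoint V) ^ n) x) - V (adjoint V (((adjoint V) ^ n) x)) ∈
          LinearMap.ker (adjoint V).toLinearMap := by
        rw [LinearMap.mem_ker]
        have : adjoint V (V (adjoint V (((adjoint V) ^ n) x)))
            = adjoint V (((adjoint V) ^ n) x) := by
          rw [← ContinuousLinearMap.comp_apply, ← ContinuousLinearMap.mul_def, hV, ContinuousLinearMap.one_apply]
        simp only [ContinuousLinearMap.coe_coe, map_sub, this, sub_self]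
      have hmem2 : (V ^ n) ((((adjoint V) ^ n) x) - V (adjoint V (((adjoint V) ^ n) x))) ∈ K := by
        have : (V ^ n) ((((adjoint V) ^ n) x) - V (adjoint V (((adjoint V) ^ n) x))) ∈
            Submodule.map (V ^ n).toLinearMap (LinearMap.ker (adjoint V).toLinearMap) :=
          ⟨_, hy, rfl⟩
        exact (le_iSup (fun j : ℕ => Submodule.map (V ^ j).toLinearMap
          (LinearMap.ker (adjoint V).toLinearMap)) n) this
      have key : x - (V ^ (n+1)) (((adjoint V) ^ (n+1)) x)
          = (x - (V ^ n) (((adjoint V) ^ n) x))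
            + (V ^ n) ((((adjoint V) ^ n) x) - V (adjoint V (((adjoint V) ^ n) x))) := by
        rw [map_sub]
        have h1 : (V ^ (n+1)) (((adjoint V) ^ (n+1)) x)
            = (V ^ n) (V (adjoint V (((adjoint V) ^ n) x))) := by
          rw [pow_succ V, pow_succ']
          simp [ContinuousLinearMap.mul_apply]
        rw [h1]; abel
      rw [key]
      exact K.add_mem ih hmem2
  -- convergence
  have htend : Tendsto (fun m : ℕ => x - (V ^ m) (((adjoint V) ^ m) x)) atTop (𝓝 x) := by
    have h0 : Tendsto (fun m : ℕ => (V ^ m) (((adjoint V) ^ m) x)) atTop (𝓝 0) := by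
      rw [tendsto_zero_iff_norm_tendsto_zero]
      simpa only [hnormpow] using hshift x hx
    simpa using (tendsto_const_nhds (x := x)).sub h0
  exact mem_closure_of_tendsto htend (Filter.Eventually.of_forall hmem)
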